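/- arXiv:1806.08142 — 2 statements merged into one kernel-verified Lean document; each statement's English description precedes it below -/
import Mathlib

section
/- Let π₂ be a constant Poisson tensor on ℝ^N (π₂(x) = A for all x, A a constant antisymmetric N×N real matrix) and let π₁ be a Poisson tensor on ℝ^N compatible with π₂. Let c be a Casimir function for π₂ (∑_{s=1}^N (∂c/∂x_s) A_{sj} = 0 for all j) and let c̃ : ℝ^N → ℝ be a smooth function such that ∑_{s=1}^N ( π_{1,js}(y) (∂c/∂x_s)(x) + A_{js} (∂c̃/∂y_s)(y) ) = 0 for all j and all x, y ∈ ℝ^N. Then the functions on ℝ^{2N} given by F₁(x,y) = c(y) and F₂(x,y) = c(x) + c̃(y) are Casimir functions for the Poisson tensor π₁ ⋉₁ π₂ on ℝ^{2N}, i.e. the tensor with blocks Π^{xx}(x,y) = π₁(y), Π^{xy} = Π^{yx} = A, Π^{yy} = 0. -/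
open scoped ContDiff

/-- Partial derivative `∂f/∂z_s` at `z`, for functions on `ℝ^ι`. -/
noncomputable def pd {ι : Type} [Fintype ι] [DecidableEq ι]
    (s : ι) (f : (ι → ℝ) → ℝ) (x : ι → ℝ) : ℝ :=
  fderiv ℝ f x (Pi.single s 1)

/-- A Poisson tensor on `ℝ^ι`: a smooth antisymmetric matrix field satisfying the
Jacobi condition. -/
def IsPoissonTensor {ι : Type} [Fintype ι] [DecidableEq ι]
    (π : (ι → ℝ) → Matrix ι ι ℝ) : Prop :=
  (∀ i j, ContDiff ℝ ∞ fun x => π x i j) ∧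
  (∀ x i j, π x j i = - π x i j) ∧
  (∀ x i j k, ∑ s, (pd s (fun y => π y i j) x * π x s k
      + pd s (fun y => π y k i) x * π x s j
      + pd s (fun y => π y j k) x * π x s i) = 0)

/-- `c` is a (smooth) Casimir function for `π`. -/
def IsCasimir {ι : Type} [Fintype ι] [DecidableEq ι]
    (π : (ι → ℝ) → Matrix ι ι ℝ) (c : (ι → ℝ) → ℝ) : Prop :=
  ContDiff ℝ ∞ c ∧ ∀ x j, ∑ s, pd s c x * π x s j = 0

/-- The matrix of partial derivatives `(∂π_{ij}/∂x_s)(x)`. -/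
noncomputable def pdMat {N : ℕ} (s : Fin N)
    (π : (Fin N → ℝ) → Matrix (Fin N) (Fin N) ℝ) (x : Fin N → ℝ) :
    Matrix (Fin N) (Fin N) ℝ :=
  Matrix.of fun i j => pd s (fun y => π y i j) x

/-- The `x`-part of a point `z = (x,y) ∈ ℝ^{2N}`. -/
def Xc {N : ℕ} (z : (Fin N ⊕ Fin N) → ℝ) : Fin N → ℝ := fun i => z (Sum.inl i)

/-- The `y`-part of a point `z = (x,y) ∈ ℝ^{2N}`. -/
def Yc {N : ℕ} (z : (Fin N ⊕ Fin N) → ℝ) : Fin N → ℝ := fun i => z (Sum.inr i)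


noncomputable def Lr (N : ℕ) : ((Fin N ⊕ Fin N) → ℝ) →L[ℝ] (Fin N → ℝ) :=
  ContinuousLinearMap.pi fun i => ContinuousLinearMap.proj (Sum.inr i)

noncomputable def Ll (N : ℕ) : ((Fin N ⊕ Fin N) → ℝ) →L[ℝ] (Fin N → ℝ) :=
  ContinuousLinearMap.pi fun i => ContinuousLinearMap.proj (Sum.inl i)

lemma Lr_single_inl {N : ℕ} (s : Fin N) :
    (Lr N) (Pi.single (Sum.inl s) 1) = 0 := by
  ext i; simp [Lr, Pi.single_apply]

lemma Lr_single_inr {N : ℕ} (s : Fin N) :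
    (Lr N) (Pi.single (Sum.inr s) 1) = Pi.single s 1 := by
  ext i; simp [Lr, Pi.single_apply]

lemma Ll_single_inl {N : ℕ} (s : Fin N) :
    (Ll N) (Pi.single (Sum.inl s) 1) = Pi.single s 1 := by
  ext i; simp [Ll, Pi.single_apply]

lemma Ll_single_inr {N : ℕ} (s : Fin N) :
    (Ll N) (Pi.single (Sum.inr s) 1) = 0 := by
  ext i; simp [Ll, Pi.single_apply]

lemma pd_comp_r {N : ℕ} (c : (Fin N → ℝ) → ℝ) (hc : ContDiff ℝ ∞ c)
    (z : (Fin N ⊕ Fin N) → ℝ) (t : Fin N ⊕ Fin N) :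
    pd t (fun z => c (Yc z)) z =
      Sum.elim (fun _ => (0:ℝ)) (fun s => pd s c (Yc z)) t := by
  have h1 : (fun z : (Fin N ⊕ Fin N) → ℝ => c (Yc z)) = c ∘ (Lr N) := rfl
  rw [pd, h1, fderiv_comp _ (hc.differentiable (by norm_num)).differentiableAt
    (Lr N).differentiableAt]
  simp only [ContinuousLinearMap.fderiv, ContinuousLinearMap.coe_comp',
    Function.comp_apply]
  cases t with
  | inl s => rw [Lr_single_inl]; simp
  | inr s => rw [Lr_single_inr]; rfl

lemma pd_comp_l {N : ℕ} (c : (Fin N → ℝ) → ℝ) (hc : ContDiff ℝ ∞ c)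
    (z : (Fin N ⊕ Fin N) → ℝ) (t : Fin N ⊕ Fin N) :
    pd t (fun z => c (Xc z)) z =
      Sum.elim (fun s => pd s c (Xc z)) (fun _ => (0:ℝ)) t := by
  have h1 : (fun z : (Fin N ⊕ Fin N) → ℝ => c (Xc z)) = c ∘ (Ll N) := rfl
  rw [pd, h1, fderiv_comp _ (hc.differentiable (by norm_num)).differentiableAt
    (Ll N).differentiableAt]
  simp only [ContinuousLinearMap.fderiv, ContinuousLinearMap.coe_comp',
    Function.comp_apply]
  cases t with
  | inl s => rw [Ll_single_inl]; rfl
  | inr s => rw [Ll_single_inr]; simp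

lemma pd_add' {ι : Type} [Fintype ι] [DecidableEq ι]
    (f g : (ι → ℝ) → ℝ) (hf : Differentiable ℝ f) (hg : Differentiable ℝ g)
    (t : ι) (z : ι → ℝ) :
    pd t (fun z => f z + g z) z = pd t f z + pd t g z := by
  unfold pd
  rw [fderiv_fun_add (hf z) (hg z)]
  rfl

/-- Casimir functions `F₁(x,y) = c(y)` and `F₂(x,y) = c(x) + c̃(y)` for the
tensor `π₁ ⋉₁ π₂ = [[π₁(y), A],[A, 0]]`, where `π₂ = A` is constant. -/
theorem stmt18 {N : ℕ} (hN : 1 ≤ N)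
    (A : Matrix (Fin N) (Fin N) ℝ) (hA : ∀ i j, A j i = - A i j)
    (π₁ : (Fin N → ℝ) → Matrix (Fin N) (Fin N) ℝ) (hπ₁ : IsPoissonTensor π₁)
    (hcomp : IsPoissonTensor (fun x => π₁ x + A))
    (c : (Fin N → ℝ) → ℝ) (hcsm : ContDiff ℝ ∞ c)
    (hcas : ∀ x j, ∑ s, pd s c x * A s j = 0)
    (ct : (Fin N → ℝ) → ℝ) (hctsm : ContDiff ℝ ∞ ct)
    (hct : ∀ (x y : Fin N → ℝ) (j : Fin N),
      ∑ s, (π₁ y j s * pd s c x + A j s * pd s ct y) = 0) :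
    IsCasimir (fun z : (Fin N ⊕ Fin N) → ℝ =>
        Matrix.fromBlocks (π₁ (Yc z)) A A 0)
      (fun z => c (Yc z)) ∧
    IsCasimir (fun z : (Fin N ⊕ Fin N) → ℝ =>
        Matrix.fromBlocks (π₁ (Yc z)) A A 0)
      (fun z => c (Xc z) + ct (Yc z)) := by
  have hYsm : ContDiff ℝ ∞ fun z : (Fin N ⊕ Fin N) → ℝ => c (Yc z) :=
    hcsm.comp (Lr N).contDiff
  have hXsm : ContDiff ℝ ∞ fun z : (Fin N ⊕ Fin N) → ℝ => c (Xc z) :=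
    hcsm.comp (Ll N).contDiff
  have hYtsm : ContDiff ℝ ∞ fun z : (Fin N ⊕ Fin N) → ℝ => ct (Yc z) :=
    hctsm.comp (Lr N).contDiff
  constructor
  · refine ⟨hYsm, fun z j => ?_⟩
    rw [Fintype.sum_sum_type]
    simp only [pd_comp_r c hcsm z, Sum.elim_inl, Sum.elim_inr]
    cases j with
    | inl j =>
      simp only [Matrix.fromBlocks_apply₁₁, Matrix.fromBlocks_apply₂₁]
      simpa using hcas (Yc z) j
    | inr j =>
      simp [Matrix.fromBlocks_apply₁₂, Matrix.fromBlocks_apply₂₂]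
  · refine ⟨hXsm.add hYtsm, fun z j => ?_⟩
    have hpd : ∀ t, pd t (fun z : (Fin N ⊕ Fin N) → ℝ => c (Xc z) + ct (Yc z)) z
        = Sum.elim (fun s => pd s c (Xc z)) (fun s => pd s ct (Yc z)) t := by
      intro t
      rw [pd_add' _ _ (hXsm.differentiable (by norm_num)) (hYtsm.differentiable (by norm_num)),
        pd_comp_l c hcsm z t, pd_comp_r ct hctsm z t]
      cases t <;> simp
    rw [Fintype.sum_sum_type]
    simp only [hpd, Sum.elim_inl, Sum.elim_inr]
    cases j with
    | inl j =>
      simp only [Matrix.fromBlocks_apply₁₁, Matrix.fromBlocks_apply₂₁]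
      have := hct (Xc z) (Yc z) j
      have h2 : ∀ s, π₁ (Yc z) s j = - π₁ (Yc z) j s := fun s => hπ₁.2.1 (Yc z) j s
      have h3 : ∀ s, A s j = - A j s := fun s => hA j s
      calc ∑ s, pd s c (Xc z) * π₁ (Yc z) s j + ∑ s, pd s ct (Yc z) * A s j
          = -∑ s, (π₁ (Yc z) j s * pd s c (Xc z) + A j s * pd s ct (Yc z)) := by
            rw [Finset.sum_add_distrib, neg_add, ← Finset.sum_neg_distrib,
              ← Finset.sum_neg_distrib]
            congr 1 <;> apply Finset.sum_congr rfl <;> intro s _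
            · rw [h2 s]; ring
            · rw [h3 s]; ring
        _ = 0 := by rw [this]; simp
    | inr j =>
      simp only [Matrix.fromBlocks_apply₁₂, Matrix.fromBlocks_apply₂₂]
      have := hcas (Xc z) j
      simpa using this
end

section
/- Let π₂ be a constant Poisson tensor on ℝ^N (π₂(x) = A for all x, A a constant antisymmetric N×N real matrix) and let π₁ be a Poisson tensor on ℝ^N compatible with π₂. Let H, K : ℝ^N → ℝ be smooth functions in involution with respect to both structures: ∑_{s,m} π_{1,sm}(x) (∂H/∂x_s)(∂K/∂x_m) = 0 and ∑_{s,m} A_{sm} (∂H/∂x_s)(∂K/∂x_m) = 0 on ℝ^N. Define on ℝ^{2N} the functions H̄(x,y) = H(y), K̄(x,y) = K(y), H̃(x,y) = ∑_{s=1}^N (∂H/∂x_s)(y)·x_s, K̃(x,y) = ∑_{s=1}^N (∂K/∂x_s)(y)·x_s. Then all pairwise Poisson brackets with respect to the Poisson tensor π₁ ⋉₁ π₂ on ℝ^{2N} (blocks Π^{xx}(x,y)=π₁(y), Π^{xy}=Π^{yx}=A, Π^{yy}=0) vanish: {H̄,K̄} = {H̄,K̃} = {H̃,K̄} = {H̃,K̃}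 = 0. -/
open scoped ContDiff

/-- Poisson bracket of functions with respect to a matrix field `Π`:
`{F,G} = ∑_{i,j} Π_{ij} ∂F/∂z_i ∂G/∂z_j`. -/
noncomputable def pBr {ι : Type} [Fintype ι] [DecidableEq ι]
    (P : (ι → ℝ) → Matrix ι ι ℝ) (F G : (ι → ℝ) → ℝ) (z : ι → ℝ) : ℝ :=
  ∑ i, ∑ j, P z i j * pd i F z * pd j G z

lemma contDiff_pd {ι : Type} [Fintype ι] [DecidableEq ι] (s : ι)
    {f : (ι → ℝ) → ℝ} (hf : ContDiff ℝ ∞ f) : ContDiff ℝ ∞ (pd s f) :=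
  (hf.fderiv_right (by simp)).clm_apply contDiff_const

lemma pd_comm {ι : Type} [Fintype ι] [DecidableEq ι] (s j : ι)
    {f : (ι → ℝ) → ℝ} (hf : ContDiff ℝ ∞ f) (x : ι → ℝ) :
    pd j (pd s f) x = pd s (pd j f) x := by
  have hsym : IsSymmSndFDerivAt ℝ f x :=
    (hf.contDiffAt).isSymmSndFDerivAt (by simp; exact (WithTop.coe_le_coe.mpr le_top : (2 : WithTop ℕ∞) ≤ ∞))
  have hdf : DifferentiableAt ℝ (fderiv ℝ f) x :=
    ((hf.fderiv_right (m := ∞) (by simp)).differentiable (by decide)).differentiableAt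
  have key : ∀ v w : (ι → ℝ), fderiv ℝ (fun y => fderiv ℝ f y v) x w
      = fderiv ℝ (fderiv ℝ f) x w v := by
    intro v w
    rw [fderiv_clm_apply hdf (differentiableAt_const v)]
    simp
  unfold pd
  rw [key, key, hsym]

noncomputable def YcL (N : ℕ) : ((Fin N ⊕ Fin N) → ℝ) →L[ℝ] (Fin N → ℝ) :=
  ContinuousLinearMap.pi fun i => ContinuousLinearMap.proj (Sum.inr i)

lemma YcL_apply {N : ℕ} (z : (Fin N ⊕ Fin N) → ℝ) : YcL N z = Yc z := rfl

lemma YcL_single_inl {N : ℕ} (i : Fin N) :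
    YcL N (Pi.single (Sum.inl i) 1) = 0 := by
  ext j; simp [YcL, Pi.single_apply]

lemma YcL_single_inr {N : ℕ} (i : Fin N) :
    YcL N (Pi.single (Sum.inr i) 1) = Pi.single i 1 := by
  ext j; simp [YcL, Pi.single_apply]

lemma contDiff_comp_Yc {N : ℕ} {f : (Fin N → ℝ) → ℝ} (hf : ContDiff ℝ ∞ f) :
    ContDiff ℝ ∞ (fun z : (Fin N ⊕ Fin N) → ℝ => f (Yc z)) :=
  hf.comp (YcL N).contDiff

lemma fderiv_comp_Yc {N : ℕ} {f : (Fin N → ℝ) → ℝ} (hf : ContDiff ℝ ∞ f)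
    (z : (Fin N ⊕ Fin N) → ℝ) (v : (Fin N ⊕ Fin N) → ℝ) :
    fderiv ℝ (fun z => f (Yc z)) z v = fderiv ℝ f (Yc z) (YcL N v) := by
  have : (fun z : (Fin N ⊕ Fin N) → ℝ => f (Yc z)) = f ∘ (YcL N) := rfl
  rw [this, fderiv_comp z (hf.differentiable (by decide) _)
      (YcL N).differentiableAt, (YcL N).fderiv]
  rfl

lemma pd_comp_Yc_inl {N : ℕ} {f : (Fin N → ℝ) → ℝ} (hf : ContDiff ℝ ∞ f)
    (z : (Fin N ⊕ Fin N) → ℝ) (i : Fin N) :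
    pd (Sum.inl i) (fun z => f (Yc z)) z = 0 := by
  unfold pd; rw [fderiv_comp_Yc hf, YcL_single_inl]; simp

lemma pd_comp_Yc_inr {N : ℕ} {f : (Fin N → ℝ) → ℝ} (hf : ContDiff ℝ ∞ f)
    (z : (Fin N ⊕ Fin N) → ℝ) (i : Fin N) :
    pd (Sum.inr i) (fun z => f (Yc z)) z = pd i f (Yc z) := by
  unfold pd; rw [fderiv_comp_Yc hf, YcL_single_inr]

lemma pd_coord {ι : Type} [Fintype ι] [DecidableEq ι] (e a : ι) (z : ι → ℝ) :
    pd e (fun z => z a) z = if a = e then 1 else 0 := by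
  unfold pd
  have : (fun z : ι → ℝ => z a) = (ContinuousLinearMap.proj (R := ℝ) a) := rfl
  rw [this, ContinuousLinearMap.fderiv]
  simp [Pi.single_apply]

lemma pd_sum {ι κ : Type} [Fintype ι] [DecidableEq ι] [Fintype κ] (e : ι)
    (g : κ → (ι → ℝ) → ℝ) (z : ι → ℝ)
    (hg : ∀ k, DifferentiableAt ℝ (g k) z) :
    pd e (fun z => ∑ k, g k z) z = ∑ k, pd e (g k) z := by
  unfold pd
  rw [fderiv_fun_sum fun k _ => hg k]
  simp

lemma pd_mul {ι : Type} [Fintype ι] [DecidableEq ι] (e : ι)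
    (f g : (ι → ℝ) → ℝ) (z : ι → ℝ)
    (hf : DifferentiableAt ℝ f z) (hg : DifferentiableAt ℝ g z) :
    pd e (fun z => f z * g z) z = pd e f z * g z + f z * pd e g z := by
  unfold pd
  rw [fderiv_fun_mul hf hg]
  simp only [ContinuousLinearMap.add_apply, ContinuousLinearMap.smul_apply, smul_eq_mul]
  ring

lemma pd_const_mul {ι : Type} [Fintype ι] [DecidableEq ι] (e : ι) (c : ℝ)
    (f : (ι → ℝ) → ℝ) (z : ι → ℝ) (hf : DifferentiableAt ℝ f z) :
    pd e (fun z => c * f z) z = c * pd e f z := by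
  unfold pd
  rw [fderiv_const_mul hf]
  simp

lemma differentiableAt_coord {ι : Type} [Fintype ι] [DecidableEq ι] (a : ι) (z : ι → ℝ) :
    DifferentiableAt ℝ (fun z : ι → ℝ => z a) z := by
  have : (fun z : ι → ℝ => z a) = (ContinuousLinearMap.proj (R := ℝ) a) := rfl
  rw [this]; exact (ContinuousLinearMap.proj (R := ℝ) (φ := fun _ : ι => ℝ) a).differentiableAt

lemma difftilde {N : ℕ} {f : (Fin N → ℝ) → ℝ} (hf : ContDiff ℝ ∞ f)
    (s : Fin N) (z : (Fin N ⊕ Fin N) → ℝ) :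
    DifferentiableAt ℝ (fun z : (Fin N ⊕ Fin N) → ℝ => pd s f (Yc z) * z (Sum.inl s)) z :=
  (((contDiff_comp_Yc (contDiff_pd s hf)).differentiable (by decide)) z).mul
    (differentiableAt_coord _ z)

lemma pd_tilde_inl {N : ℕ} {f : (Fin N → ℝ) → ℝ} (hf : ContDiff ℝ ∞ f)
    (z : (Fin N ⊕ Fin N) → ℝ) (i : Fin N) :
    pd (Sum.inl i) (fun z => ∑ s, pd s f (Yc z) * z (Sum.inl s)) z = pd i f (Yc z) := by
  rw [pd_sum _ _ _ (fun s => difftilde hf s z)]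
  have : ∀ s : Fin N, pd (Sum.inl i) (fun z : (Fin N ⊕ Fin N) → ℝ =>
      pd s f (Yc z) * z (Sum.inl s)) z
      = (if s = i then 1 else 0) * pd s f (Yc z) := by
    intro s
    rw [pd_mul _ _ _ _ (((contDiff_comp_Yc (contDiff_pd s hf)).differentiable (by decide)) z)
        (differentiableAt_coord _ z),
      pd_comp_Yc_inl (contDiff_pd s hf), pd_coord]
    simp [Sum.inl.injEq, eq_comm]
  simp only [this, ite_mul, one_mul, zero_mul]
  simp

lemma pd_tilde_inr {N : ℕ} {f : (Fin N → ℝ) → ℝ} (hf : ContDiff ℝ ∞ f)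
    (z : (Fin N ⊕ Fin N) → ℝ) (j : Fin N) :
    pd (Sum.inr j) (fun z => ∑ s, pd s f (Yc z) * z (Sum.inl s)) z
      = ∑ s, pd j (pd s f) (Yc z) * z (Sum.inl s) := by
  rw [pd_sum _ _ _ (fun s => difftilde hf s z)]
  apply Finset.sum_congr rfl
  intro s _
  rw [pd_mul _ _ _ _ (((contDiff_comp_Yc (contDiff_pd s hf)).differentiable (by decide)) z)
      (differentiableAt_coord _ z),
    pd_comp_Yc_inr (contDiff_pd s hf), pd_coord]
  simp

lemma deriv_inv0 {N : ℕ} (A : Matrix (Fin N) (Fin N) ℝ)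
    {H K : (Fin N → ℝ) → ℝ} (hH : ContDiff ℝ ∞ H) (hK : ContDiff ℝ ∞ K)
    (hinv : ∀ x, ∑ i, ∑ m, A i m * pd i H x * pd m K x = 0)
    (y : Fin N → ℝ) (s : Fin N) :
    ∑ i, ∑ m, (A i m * pd s (pd i H) y * pd m K y
      + A i m * pd i H y * pd s (pd m K) y) = 0 := by
  have dterm : ∀ i m : Fin N, DifferentiableAt ℝ (fun x => A i m * pd i H x * pd m K x) y := by
    intro i m
    exact (((contDiff_const.mul (contDiff_pd i hH)).mul (contDiff_pd m hK)).differentiable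
      (by decide)) y
  have h0 : pd s (fun x => ∑ i, ∑ m, A i m * pd i H x * pd m K x) y = 0 := by
    have he : (fun x : Fin N → ℝ => ∑ i, ∑ m, A i m * pd i H x * pd m K x)
        = fun _ => (0:ℝ) := funext hinv
    rw [he]; unfold pd; simp
  rw [pd_sum _ _ _ (fun i => DifferentiableAt.fun_sum (fun m _ => dterm i m))] at h0
  have h1 : ∀ i : Fin N, pd s (fun x => ∑ m, A i m * pd i H x * pd m K x) y
      = ∑ m, (A i m * pd s (pd i H) y * pd m K y
        + A i m * pd i H y * pd s (pd m K) y) := by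
    intro i
    rw [pd_sum _ _ _ (fun m => dterm i m)]
    apply Finset.sum_congr rfl
    intro m _
    rw [pd_mul _ _ _ _ ((contDiff_const.mul (contDiff_pd i hH)).differentiable (by decide) y)
        ((contDiff_pd m hK).differentiable (by decide) y),
      pd_const_mul _ _ _ _ ((contDiff_pd i hH).differentiable (by decide) y)]
  simp only [h1] at h0
  exact h0

lemma sum_rot {N : ℕ} (G : Fin N → Fin N → Fin N → ℝ) :
    ∑ i, ∑ j, ∑ s, G i j s = ∑ s, ∑ i, ∑ j, G i j s := by
  calc ∑ i, ∑ j, ∑ s, G i j s = ∑ i, ∑ s, ∑ j, G i j s :=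
        Finset.sum_congr rfl fun i _ => Finset.sum_comm
    _ = ∑ s, ∑ i, ∑ j, G i j s := Finset.sum_comm

lemma combine {N : ℕ} (A : Matrix (Fin N) (Fin N) ℝ)
    {H K : (Fin N → ℝ) → ℝ} (hH : ContDiff ℝ ∞ H) (hK : ContDiff ℝ ∞ K)
    (hinv : ∀ x, ∑ i, ∑ m, A i m * pd i H x * pd m K x = 0)
    (y : Fin N → ℝ) (c : Fin N → ℝ) :
    ∑ i, ∑ j, A i j * pd i H y * (∑ s, pd j (pd s K) y * c s)
      + ∑ i, ∑ j, A i j * (∑ s, pd i (pd s H) y * c s) * pd j K y = 0 := by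
  have e1 : ∀ i j, A i j * pd i H y * (∑ s, pd j (pd s K) y * c s)
      = ∑ s, c s * (A i j * pd i H y * pd s (pd j K) y) := by
    intro i j
    rw [Finset.mul_sum]
    refine Finset.sum_congr rfl fun s _ => ?_
    rw [pd_comm s j hK]; ring
  have e2 : ∀ i j, A i j * (∑ s, pd i (pd s H) y * c s) * pd j K y
      = ∑ s, c s * (A i j * pd s (pd i H) y * pd j K y) := by
    intro i j
    rw [Finset.mul_sum, Finset.sum_mul]
    refine Finset.sum_congr rfl fun s _ => ?_
    rw [pd_comm s i hH]; ring
  simp only [e1, e2]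
  rw [← Finset.sum_add_distrib]
  simp only [← Finset.sum_add_distrib]
  rw [sum_rot]
  apply Finset.sum_eq_zero
  intro s _
  have hzero := deriv_inv0 A hH hK hinv y s
  calc ∑ i, ∑ j, (c s * (A i j * pd i H y * pd s (pd j K) y)
        + c s * (A i j * pd s (pd i H) y * pd j K y))
      = c s * ∑ i, ∑ j, (A i j * pd s (pd i H) y * pd j K y
        + A i j * pd i H y * pd s (pd j K) y) := by
        rw [Finset.mul_sum]
        refine Finset.sum_congr rfl fun i _ => ?_
        rw [Finset.mul_sum]
        refine Finset.sum_congr rfl fun j _ => ?_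
        ring
    _ = 0 := by rw [hzero, mul_zero]


/-- for `H, K` in involution w.r.t. both `π₁` and the constant tensor
`π₂ = A`, the lifts `H̄(x,y) = H(y)`, `H̃(x,y) = ∑_s (∂H/∂x_s)(y) x_s` (and likewise for
`K`) pairwise Poisson-commute w.r.t. `π₁ ⋉₁ π₂ = [[π₁(y), A],[A, 0]]`. -/
theorem stmt19 {N : ℕ} (hN : 1 ≤ N)
    (A : Matrix (Fin N) (Fin N) ℝ) (hA : ∀ i j, A j i = - A i j)
    (π₁ : (Fin N → ℝ) → Matrix (Fin N) (Fin N) ℝ) (hπ₁ : IsPoissonTensor π₁)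
    (hcomp : IsPoissonTensor (fun x => π₁ x + A))
    (H K : (Fin N → ℝ) → ℝ) (hH : ContDiff ℝ ∞ H) (hK : ContDiff ℝ ∞ K)
    (hinv₁ : ∀ x, ∑ s, ∑ m, π₁ x s m * pd s H x * pd m K x = 0)
    (hinv₂ : ∀ x, ∑ s, ∑ m, A s m * pd s H x * pd m K x = 0) :
    (∀ z : (Fin N ⊕ Fin N) → ℝ,
      pBr (fun z => Matrix.fromBlocks (π₁ (Yc z)) A A 0)
        (fun z => H (Yc z)) (fun z => K (Yc z)) z = 0) ∧
    (∀ z : (Fin N ⊕ Fin N) → ℝ,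
      pBr (fun z => Matrix.fromBlocks (π₁ (Yc z)) A A 0)
        (fun z => H (Yc z)) (fun z => ∑ s, pd s K (Yc z) * z (Sum.inl s)) z = 0) ∧
    (∀ z : (Fin N ⊕ Fin N) → ℝ,
      pBr (fun z => Matrix.fromBlocks (π₁ (Yc z)) A A 0)
        (fun z => ∑ s, pd s H (Yc z) * z (Sum.inl s)) (fun z => K (Yc z)) z = 0) ∧
    (∀ z : (Fin N ⊕ Fin N) → ℝ,
      pBr (fun z => Matrix.fromBlocks (π₁ (Yc z)) A A 0)
        (fun z => ∑ s, pd s H (Yc z) * z (Sum.inl s))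
        (fun z => ∑ s, pd s K (Yc z) * z (Sum.inl s)) z = 0) := by
  refine ⟨?_, ?_, ?_, ?_⟩
  · intro z
    simp only [pBr, Fintype.sum_sum_type, Matrix.fromBlocks_apply₁₁, Matrix.fromBlocks_apply₁₂,
      Matrix.fromBlocks_apply₂₁, Matrix.fromBlocks_apply₂₂,
      pd_comp_Yc_inl hH, pd_comp_Yc_inl hK, pd_comp_Yc_inr hH, pd_comp_Yc_inr hK,
      Matrix.zero_apply]
    simp
  · intro z
    simp only [pBr, Fintype.sum_sum_type, Matrix.fromBlocks_apply₁₁, Matrix.fromBlocks_apply₁₂,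
      Matrix.fromBlocks_apply₂₁, Matrix.fromBlocks_apply₂₂,
      pd_comp_Yc_inl hH, pd_comp_Yc_inr hH, pd_tilde_inl hK, pd_tilde_inr hK,
      Matrix.zero_apply, zero_mul, mul_zero, Finset.sum_const_zero, add_zero, zero_add]
    simpa using hinv₂ (Yc z)
  · intro z
    simp only [pBr, Fintype.sum_sum_type, Matrix.fromBlocks_apply₁₁, Matrix.fromBlocks_apply₁₂,
      Matrix.fromBlocks_apply₂₁, Matrix.fromBlocks_apply₂₂,
      pd_comp_Yc_inl hK, pd_comp_Yc_inr hK, pd_tilde_inl hH, pd_tilde_inr hH,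
      Matrix.zero_apply, zero_mul, mul_zero, Finset.sum_const_zero, add_zero, zero_add]
    simpa using hinv₂ (Yc z)
  · intro z
    simp only [pBr, Fintype.sum_sum_type, Matrix.fromBlocks_apply₁₁, Matrix.fromBlocks_apply₁₂,
      Matrix.fromBlocks_apply₂₁, Matrix.fromBlocks_apply₂₂,
      pd_tilde_inl hH, pd_tilde_inl hK, pd_tilde_inr hH, pd_tilde_inr hK,
      Matrix.zero_apply, zero_mul, Finset.sum_const_zero, add_zero]
    rw [Finset.sum_add_distrib]
    have h2 := combine A hH hK hinv₂ (Yc z) (fun s => z (Sum.inl s))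
    beta_reduce at h2
    linarith [hinv₁ (Yc z), h2]
end
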